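/- Let A = C + c₀ + ℂI ⊆ B(ℓ²), where C is the first column of compact operators (matrices supported in the first column with ℓ² entries) and c₀ is the main diagonal with entries tending to 0. Let J ⊆ A be the set of diagonal matrices with zero (1,1) entry and diagonal in c₀. Let b ∈ A be the matrix with diagonal all 1's and first column v ∈ ℓ² with v_j ≠ 0 for all j (and v₁ = 1). Then the distance d(b, J) = ‖v‖₂ and this distance is not attained: there is no y ∈ J with ‖b - y‖ = ‖v‖₂. -/

import Mathlib

open Filter

/-- `ℓ²` of complex sequences indexed by `ℕ` (index `0` playing the role of the
"first" coordinate). -/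
noncomputable abbrev Ell2 : Type := lp (fun _ : ℕ => ℂ) 2

/-- `MatRep v d T` says the operator `T` on `ℓ²` is given by the infinite matrix
whose first column is `v` and whose remaining diagonal entries are `d j`
(`j ≥ 1`), all other entries being `0`:
`(Tζ)_0 = v_0 ζ_0` and `(Tζ)_j = v_j ζ_0 + d_j ζ_j` for `j ≥ 1`. -/
def MatRep (v d : ℕ → ℂ) (T : Ell2 →L[ℂ] Ell2) : Prop :=
  ∀ (ζ : Ell2) (j : ℕ),
    (T ζ : ∀ _ : ℕ, ℂ) j = v j * (ζ : ∀ _ : ℕ, ℂ) 0 +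
      (if j = 0 then 0 else d j * (ζ : ∀ _ : ℕ, ℂ) j)

/-- The left ideal `J ⊆ A`: diagonal matrices with zero first (i.e. `(1,1)`)
entry and diagonal tending to `0`. -/
def Jset : Set (Ell2 →L[ℂ] Ell2) :=
  {T | ∃ d : ℕ → ℂ, Tendsto d atTop (nhds 0) ∧ MatRep (fun _ => 0) d T}

/-! ### Auxiliary lemmas -/

lemma ell2_norm_sq (f : Ell2) : ‖f‖ ^ 2 = ∑' j, ‖(f : ∀ _ : ℕ, ℂ) j‖ ^ 2 := by
  have h := lp.norm_rpow_eq_tsum (p := 2) (E := fun _ : ℕ => ℂ) (by norm_num) f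
  simp only [ENNReal.toReal_ofNat] at h
  rw [show ((2:ℝ)) = ((2:ℕ):ℝ) by norm_num] at h
  simpa [Real.rpow_natCast] using h

lemma ell2_summable (f : Ell2) : Summable fun j => ‖(f : ∀ _ : ℕ, ℂ) j‖ ^ 2 := by
  have h := (lp.memℓp f).summable (p := 2) (by norm_num)
  simp only [ENNReal.toReal_ofNat] at h
  rw [show ((2:ℝ)) = ((2:ℕ):ℝ) by norm_num] at h
  simpa [Real.rpow_natCast] using h

lemma tsum_update {f : ℕ → ℝ} (hf : Summable f) (j : ℕ) (a : ℝ) :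
    ∑' k, (if k = j then a else f k) = (∑' k, f k) - f j + a := by
  have h1 : (fun k => if k = j then a else f k)
      = fun k => f k + (if k = j then a - f j else 0) := by
    funext k; by_cases h : k = j <;> simp [h]
  rw [h1, Summable.tsum_add hf (hasSum_ite_eq j (a - f j)).summable,
    (hasSum_ite_eq j (a - f j)).tsum_eq]
  ring

lemma sq_add_le {t x y : ℝ} (ht : 0 < t) :
    (x + y) ^ 2 ≤ (1 + t) * x ^ 2 + (1 + 1 / t) * y ^ 2 := by
  have h : 0 ≤ (t * x - y) ^ 2 := sq_nonneg _
  have h2 : (1 + t) * x ^ 2 + (1 + 1/t) * y ^ 2 - (x + y) ^ 2 = (t*x - y)^2 / t := by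
    field_simp; ring
  nlinarith [div_nonneg h ht.le]

lemma zero_mem_Jset : (0 : Ell2 →L[ℂ] Ell2) ∈ Jset := by
  refine ⟨fun _ => 0, tendsto_const_nhds, fun ζ j => ?_⟩
  simp

noncomputable def eb (j : ℕ) : Ell2 := lp.single 2 j (1:ℂ)

noncomputable def truncOp (N : ℕ) : Ell2 →L[ℂ] Ell2 :=
  ∑ j ∈ Finset.Ico 1 N, (innerSL ℂ (eb j)).smulRight (eb j)

lemma eb_apply (j k : ℕ) : ((eb j : Ell2) : ∀ _ : ℕ, ℂ) k = if k = j then 1 else 0 := by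
  by_cases h : k = j
  · subst h
    rw [if_pos rfl]
    exact lp.single_apply_self (E := fun _ : ℕ => ℂ) 2 k (1:ℂ)
  · rw [if_neg h]
    exact lp.single_apply_ne (E := fun _ : ℕ => ℂ) 2 j (1:ℂ) h

lemma inner_eb (j : ℕ) (ζ : Ell2) : @inner ℂ _ _ (eb j) ζ = (ζ : ∀ _ : ℕ, ℂ) j := by
  rw [eb, lp.inner_single_left]
  simp [RCLike.inner_apply]

lemma truncOp_apply (N : ℕ) (ζ : Ell2) (k : ℕ) :
    ((truncOp N ζ : Ell2) : ∀ _ : ℕ, ℂ) k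
      = if k ∈ Finset.Ico 1 N then (ζ : ∀ _ : ℕ, ℂ) k else 0 := by
  have h1 : truncOp N ζ = ∑ j ∈ Finset.Ico 1 N, (ζ : ∀ _ : ℕ, ℂ) j • eb j := by
    simp [truncOp, ContinuousLinearMap.sum_apply, inner_eb]
  rw [h1]
  have h2 : ((∑ j ∈ Finset.Ico 1 N, (ζ : ∀ _ : ℕ, ℂ) j • eb j : Ell2) : ∀ _ : ℕ, ℂ) k
      = ∑ j ∈ Finset.Ico 1 N, (ζ : ∀ _ : ℕ, ℂ) j * ((eb j : Ell2) : ∀ _ : ℕ, ℂ) k := by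
    rw [lp.coeFn_sum]; simp
  rw [h2]
  simp only [eb_apply, mul_ite, mul_one, mul_zero]
  rw [Finset.sum_ite_eq (Finset.Ico 1 N) k]

lemma truncOp_rep (N : ℕ) :
    MatRep (fun _ => 0) (fun k => if k ∈ Finset.Ico 1 N then 1 else 0) (truncOp N) := by
  intro ζ j
  rw [truncOp_apply]
  by_cases hj : j = 0
  · have : j ∉ Finset.Ico 1 N := by simp [hj]
    simp [hj, this]
  · by_cases h : j ∈ Finset.Ico 1 N <;> simp [hj, h]

lemma truncOp_mem_Jset (N : ℕ) : truncOp N ∈ Jset := by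
  refine ⟨fun k => if k ∈ Finset.Ico 1 N then 1 else 0, ?_, truncOp_rep N⟩
  apply Tendsto.congr' _ tendsto_const_nhds
  filter_upwards [eventually_ge_atTop N] with k hk
  have : k ∉ Finset.Ico 1 N := by simp [Finset.mem_Ico]; omega
  simp [this]

/-! ### The main estimate -/

lemma est (v : ℕ → ℂ) (hv : Memℓp v 2) (hv1 : ‖v 0‖ = 1)
    (b y : Ell2 →L[ℂ] Ell2) (hb : MatRep v (fun _ => 1) b)
    (N : ℕ) (hN : 1 ≤ N)
    (hyrep : MatRep (fun _ => 0) (fun k => if k ∈ Finset.Ico 1 N then 1 else 0) y)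
    (t ε : ℝ) (ht : 0 < t) (hε : 0 < ε)
    (h1t : 1 + 1/t ≤ ‖(⟨v, hv⟩ : Ell2)‖ ^ 2)
    (hδ : t * ∑' i, ‖v (i + N)‖ ^ 2 ≤ ε) (ζ : Ell2) :
    ‖(b - y) ζ‖ ^ 2 ≤ (‖(⟨v, hv⟩ : Ell2)‖ ^ 2 + ε) * ‖ζ‖ ^ 2 := by
  set V : Ell2 := ⟨v, hv⟩ with hV
  have hVc : ((V : Ell2) : ∀ _ : ℕ, ℂ) = v := rfl
  have Sv : Summable fun k => ‖v k‖ ^ 2 := by simpa [hVc] using ell2_summable V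
  set z : ℕ → ℝ := fun k => ‖(ζ : ∀ _ : ℕ, ℂ) k‖ ^ 2 with hz
  have Sz : Summable z := ell2_summable ζ
  have hznn : ∀ k, 0 ≤ z k := fun k => sq_nonneg _
  set z0 : ℝ := z 0 with hz0
  have hz0nn : 0 ≤ z0 := hznn 0
  -- coordinates of (b - y) ζ
  have h0N : 0 < N := hN
  have hco : ∀ k, ((((b - y) ζ) : Ell2) : ∀ _ : ℕ, ℂ) k
      = v k * (ζ : ∀ _ : ℕ, ℂ) 0 + (if k < N then 0 else (ζ : ∀ _ : ℕ, ℂ) k) := by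
    intro k
    have hcoe : ((((b - y) ζ) : Ell2) : ∀ _ : ℕ, ℂ) k
        = (b ζ : ∀ _ : ℕ, ℂ) k - (y ζ : ∀ _ : ℕ, ℂ) k := by
      rw [ContinuousLinearMap.sub_apply, lp.coeFn_sub]; rfl
    rw [hcoe, hb ζ k, hyrep ζ k]
    beta_reduce
    by_cases hk : k = 0
    · subst hk; rw [if_pos h0N]; simp
    · rw [if_neg hk, if_neg hk]
      by_cases hk2 : k ∈ Finset.Ico 1 N
      · have h3 : k < N := (Finset.mem_Ico.mp hk2).2
        rw [if_pos hk2, if_pos h3]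
        ring
      · have h3 : ¬ k < N := by
          simp only [Finset.mem_Ico] at hk2; omega
        rw [if_neg hk2, if_neg h3]
        ring
  -- majorant pieces
  set u : ℕ → ℝ := fun k => if k < N then 0 else ‖v k‖ ^ 2 with hu
  have Su : Summable u := by
    refine Summable.of_nonneg_of_le (fun k => ?_) (fun k => ?_) Sv
    · by_cases h : k < N <;> simp [hu, h, sq_nonneg]
    · by_cases h : k < N <;> simp [hu, h, sq_nonneg]
  set z' : ℕ → ℝ := fun k => if k < N then 0 else z k with hz'
  have Sz' : Summable z' := by
    refine Summable.of_nonneg_of_le (fun k => ?_) (fun k => ?_) Sz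
    · by_cases h : k < N <;> simp [hz', h, hznn k]
    · by_cases h : k < N <;> simp [hz', h, hznn k]
  set w1 : ℕ → ℝ := fun k => ‖v k‖ ^ 2 * z0 + t * u k * z0 with hw1
  set w2 : ℕ → ℝ := fun k => (1 + 1/t) * z' k with hw2
  have Sw1 : Summable w1 := (Sv.mul_right z0).add ((Su.mul_left t).mul_right z0)
  have Sw2 : Summable w2 := Sz'.mul_left _
  -- pointwise bound
  have hpt : ∀ k, ‖(((b - y) ζ : Ell2) : ∀ _ : ℕ, ℂ) k‖ ^ 2 ≤ w1 k + w2 k := by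
    intro k
    rw [hco k]
    have hnz : ‖v k * (ζ : ∀ _ : ℕ, ℂ) 0‖ ^ 2 = ‖v k‖ ^ 2 * z0 := by
      rw [norm_mul, mul_pow]
    by_cases hkN : k < N
    · rw [if_pos hkN, add_zero, hnz]
      simp only [hw1, hw2, hu, hz', if_pos hkN]
      nlinarith [hznn k, ht]
    · rw [if_neg hkN]
      calc ‖v k * (ζ : ∀ _ : ℕ, ℂ) 0 + (ζ : ∀ _ : ℕ, ℂ) k‖ ^ 2
          ≤ (‖v k * (ζ : ∀ _ : ℕ, ℂ) 0‖ + ‖(ζ : ∀ _ : ℕ, ℂ) k‖) ^ 2 := by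
            have := norm_add_le (v k * (ζ : ∀ _ : ℕ, ℂ) 0) ((ζ : ∀ _ : ℕ, ℂ) k)
            nlinarith [norm_nonneg (v k * (ζ : ∀ _ : ℕ, ℂ) 0 + (ζ : ∀ _ : ℕ, ℂ) k), norm_nonneg (v k * (ζ : ∀ _ : ℕ, ℂ) 0), norm_nonneg ((ζ : ∀ _ : ℕ, ℂ) k)]
        _ ≤ (1 + t) * ‖v k * (ζ : ∀ _ : ℕ, ℂ) 0‖ ^ 2 + (1 + 1/t) * ‖(ζ : ∀ _ : ℕ, ℂ) k‖ ^ 2 :=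
            sq_add_le ht
        _ = w1 k + w2 k := by
            simp only [hw1, hw2, hu, hz', if_neg hkN, hnz]; ring
  -- sum up
  have hsum : ‖(b - y) ζ‖ ^ 2 ≤ ∑' k, w1 k + ∑' k, w2 k := by
    rw [ell2_norm_sq]
    calc ∑' k, ‖(((b - y) ζ : Ell2) : ∀ _ : ℕ, ℂ) k‖ ^ 2
        ≤ ∑' k, (w1 k + w2 k) := Summable.tsum_le_tsum hpt (ell2_summable _) (Sw1.add Sw2)
      _ = ∑' k, w1 k + ∑' k, w2 k := Summable.tsum_add Sw1 Sw2
  -- compute ∑' w1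
  have htu : ∑' k, u k = ∑' i, ‖v (i + N)‖ ^ 2 := by
    have h1 := Summable.sum_add_tsum_nat_add (f := u) N Su
    have h2 : ∑ i ∈ Finset.range N, u i = 0 := by
      apply Finset.sum_eq_zero
      intro i hi
      simp [hu, Finset.mem_range.mp hi]
    have h3 : ∀ i, u (i + N) = ‖v (i + N)‖ ^ 2 := by
      intro i; simp [hu, Nat.not_lt.mpr (Nat.le_add_left N i)]
    rw [h2, zero_add] at h1
    rw [← h1]
    exact tsum_congr h3
  have hw1sum : ∑' k, w1 k ≤ (‖V‖ ^ 2 + ε) * z0 := by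
    rw [Summable.tsum_add (Sv.mul_right z0) ((Su.mul_left t).mul_right z0),
      tsum_mul_right, tsum_mul_right, tsum_mul_left, htu]
    have hVsq : ‖V‖ ^ 2 = ∑' k, ‖v k‖ ^ 2 := by
      have := ell2_norm_sq V
      simp only [hVc] at this
      exact this
    nlinarith [hz0nn, hδ]
  have hw2sum : ∑' k, w2 k ≤ (‖V‖ ^ 2 + ε) * ∑' k, z' k := by
    rw [hw2, tsum_mul_left]
    have hznn' : 0 ≤ ∑' k, z' k := tsum_nonneg (fun k => by by_cases h : k < N <;> simp [hz', h, hznn k])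
    nlinarith [h1t, hε]
  -- z0 + ∑' z' ≤ ‖ζ‖^2
  have hzz : z0 + ∑' k, z' k ≤ ‖ζ‖ ^ 2 := by
    rw [ell2_norm_sq]
    have hcomb : ∀ k, z' k + (if k = 0 then z 0 else 0) ≤ z k := by
      intro k
      by_cases hk : k = 0
      · subst hk; simp [hz', h0N]
      · by_cases h : k < N <;> simp [hz', h, hk, hznn k]
    calc z0 + ∑' k, z' k = ∑' k, (z' k + if k = 0 then z 0 else 0) := by
          rw [Summable.tsum_add Sz' (hasSum_ite_eq 0 (z 0)).summable,
            (hasSum_ite_eq 0 (z 0)).tsum_eq]; ring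
      _ ≤ ∑' k, z k := Summable.tsum_le_tsum hcomb (Sz'.add (hasSum_ite_eq 0 (z 0)).summable) Sz
  have hVεnn : 0 ≤ ‖V‖ ^ 2 + ε := by positivity
  calc ‖(b - y) ζ‖ ^ 2 ≤ ∑' k, w1 k + ∑' k, w2 k := hsum
    _ ≤ (‖V‖ ^ 2 + ε) * z0 + (‖V‖ ^ 2 + ε) * ∑' k, z' k := add_le_add hw1sum hw2sum
    _ = (‖V‖ ^ 2 + ε) * (z0 + ∑' k, z' k) := by ring
    _ ≤ (‖V‖ ^ 2 + ε) * ‖ζ‖ ^ 2 := by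
        apply mul_le_mul_of_nonneg_left hzz hVεnn

/-! ### Non-attainment -/

lemma nonatt (v : ℕ → ℂ) (hv : Memℓp v 2) (hvj : ∀ j, v j ≠ 0)
    (b y : Ell2 →L[ℂ] Ell2) (hb : MatRep v (fun _ => 1) b)
    (d : ℕ → ℂ) (hrep : MatRep (fun _ => 0) d y)
    (hVge1 : 1 ≤ ‖(⟨v, hv⟩ : Ell2)‖)
    (hle : ∀ ζ : Ell2, ‖(b - y) ζ‖ ≤ ‖(⟨v, hv⟩ : Ell2)‖ * ‖ζ‖)
    (j : ℕ) (hj : 1 ≤ j) : d j = 1 := by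
  set V : Ell2 := ⟨v, hv⟩ with hV
  have hVc : ((V : Ell2) : ∀ _ : ℕ, ℂ) = v := rfl
  have Sv : Summable fun k => ‖v k‖ ^ 2 := by
    have := ell2_summable V; simpa [hVc] using this
  have hVsq : ‖V‖ ^ 2 = ∑' k, ‖v k‖ ^ 2 := by
    have := ell2_norm_sq V; simpa [hVc] using this
  by_contra hdj
  have hj0 : j ≠ 0 := by omega
  set c2 : ℝ := ‖(1:ℂ) - d j‖ ^ 2 with hc2
  have hc2pos : 0 < c2 := by
    have h : (1:ℂ) - d j ≠ 0 := sub_ne_zero.mpr (Ne.symm hdj)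
    have := norm_pos_iff.mpr h
    positivity
  set r : ℝ := 1 / ‖V‖ ^ 2 with hr
  have hVpos : (0:ℝ) < ‖V‖ ^ 2 := by nlinarith
  have hrpos : 0 < r := by positivity
  have hrV : r * ‖V‖ ^ 2 = 1 := by rw [hr]; field_simp
  set s : ℂ := (r : ℂ) * v j * (starRingEnd ℂ) ((1:ℂ) - d j) with hs
  set ζ : Ell2 := lp.single 2 0 (1:ℂ) + lp.single 2 j s with hζ
  have hζco : ∀ k, (ζ : ∀ _ : ℕ, ℂ) k = if k = 0 then 1 else if k = j then s else 0 := by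
    intro k
    have : (ζ : ∀ _ : ℕ, ℂ) k
        = ((lp.single 2 0 (1:ℂ) : Ell2) : ∀ _ : ℕ, ℂ) k
          + ((lp.single 2 j s : Ell2) : ∀ _ : ℕ, ℂ) k := by
      rw [hζ, lp.coeFn_add]; rfl
    rw [this]
    by_cases hk : k = 0
    · subst hk
      rw [if_pos rfl, lp.single_apply_self (E := fun _ : ℕ => ℂ),
        lp.single_apply_ne (E := fun _ : ℕ => ℂ) 2 j s (Ne.symm hj0), add_zero]
    · rw [if_neg hk, lp.single_apply_ne (E := fun _ : ℕ => ℂ) 2 0 (1:ℂ) hk, zero_add]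
      by_cases hkj : k = j
      · subst hkj
        rw [if_pos rfl, lp.single_apply_self (E := fun _ : ℕ => ℂ)]
      · rw [if_neg hkj, lp.single_apply_ne (E := fun _ : ℕ => ℂ) 2 j s hkj]
  have hs_norm : ‖s‖ ^ 2 = r ^ 2 * ‖v j‖ ^ 2 * c2 := by
    rw [hs, norm_mul, norm_mul, RCLike.norm_conj, Complex.norm_real,
      Real.norm_eq_abs, abs_of_pos hrpos]
    ring
  -- norm of ζ
  have hζsq : ‖ζ‖ ^ 2 = 1 + r ^ 2 * ‖v j‖ ^ 2 * c2 := by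
    rw [ell2_norm_sq]
    have hfun : (fun k => ‖(ζ : ∀ _ : ℕ, ℂ) k‖ ^ 2)
        = fun k => if k = j then ‖s‖ ^ 2 else (if k = 0 then (1:ℝ) else 0) := by
      funext k
      rw [hζco k]
      by_cases hk : k = 0
      · subst hk; simp [Ne.symm hj0]
      · by_cases hkj : k = j
        · subst hkj; simp [hj0]
        · simp [hk, hkj]
    rw [hfun, tsum_update ((hasSum_ite_eq 0 (1:ℝ)).summable) j (‖s‖ ^ 2),
      (hasSum_ite_eq 0 (1:ℝ)).tsum_eq, if_neg hj0, hs_norm]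
    ring
  -- (b - y) ζ coordinates
  have hGco : ∀ k, (((b - y) ζ : Ell2) : ∀ _ : ℕ, ℂ) k
      = v k + (if k = j then ((1:ℂ) - d j) * s else 0) := by
    intro k
    have hcoe : ((((b - y) ζ) : Ell2) : ∀ _ : ℕ, ℂ) k
        = (b ζ : ∀ _ : ℕ, ℂ) k - (y ζ : ∀ _ : ℕ, ℂ) k := by
      rw [ContinuousLinearMap.sub_apply, lp.coeFn_sub]; rfl
    rw [hcoe, hb ζ k, hrep ζ k]
    beta_reduce
    rw [hζco 0, if_pos rfl, hζco k]
    by_cases hk : k = 0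
    · subst hk
      rw [if_pos rfl, if_pos rfl, if_neg (Ne.symm hj0)]
      ring
    · rw [if_neg hk, if_neg hk, if_neg hk]
      by_cases hkj : k = j
      · subst hkj
        rw [if_pos rfl, if_pos rfl]
        ring
      · rw [if_neg hkj, if_neg hkj]
        ring
  -- key value at j
  have hkey : v j + ((1:ℂ) - d j) * s = v j * (1 + (r * c2 : ℝ)) := by
    rw [hs]
    have : ((1:ℂ) - d j) * ((r:ℂ) * v j * (starRingEnd ℂ) ((1:ℂ) - d j))
        = (r:ℂ) * v j * (((1:ℂ) - d j) * (starRingEnd ℂ) ((1:ℂ) - d j)) := by ring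
    rw [this, Complex.mul_conj]
    have hns : (Complex.normSq ((1:ℂ) - d j) : ℂ) = ((c2 : ℝ) : ℂ) := by
      rw [hc2, Complex.normSq_eq_norm_sq]
    rw [hns]
    push_cast
    ring
  -- norm of (b - y) ζ
  have hrc2 : (0:ℝ) < 1 + r * c2 := by positivity
  have hGsq : ‖(b - y) ζ‖ ^ 2 = ‖V‖ ^ 2 - ‖v j‖ ^ 2 + ‖v j‖ ^ 2 * (1 + r * c2) ^ 2 := by
    rw [ell2_norm_sq]
    have hfun2 : (fun k => ‖(((b - y) ζ : Ell2) : ∀ _ : ℕ, ℂ) k‖ ^ 2)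
        = fun k => if k = j then ‖v j‖ ^ 2 * (1 + r * c2) ^ 2 else ‖v k‖ ^ 2 := by
      funext k
      rw [hGco k]
      by_cases hkj : k = j
      · subst hkj
        rw [if_pos rfl, if_pos rfl, hkey,
          show (1:ℂ) + ((r * c2 : ℝ) : ℂ) = ((1 + r * c2 : ℝ) : ℂ) by push_cast; ring,
          norm_mul, Complex.norm_real, Real.norm_eq_abs, abs_of_pos hrc2, mul_pow]
      · rw [if_neg hkj, if_neg hkj, add_zero]
    rw [hfun2, tsum_update Sv j _, ← hVsq]
  -- the contradiction
  set q : ℝ := ‖v j‖ ^ 2 with hq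
  have hqpos : 0 < q := by
    have := norm_pos_iff.mpr (hvj j)
    positivity
  have hineq : ‖V‖ ^ 2 - q + q * (1 + r * c2) ^ 2 ≤ ‖V‖ ^ 2 * (1 + r ^ 2 * q * c2) := by
    have h1 := hle ζ
    have h3 : ‖(b - y) ζ‖ * ‖(b - y) ζ‖ ≤ (‖V‖ * ‖ζ‖) * (‖V‖ * ‖ζ‖) :=
      mul_le_mul h1 h1 (norm_nonneg _) (mul_nonneg (norm_nonneg _) (norm_nonneg _))
    have h2 : ‖(b - y) ζ‖ ^ 2 ≤ ‖V‖ ^ 2 * ‖ζ‖ ^ 2 := by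
      calc ‖(b - y) ζ‖ ^ 2 = ‖(b - y) ζ‖ * ‖(b - y) ζ‖ := by ring
        _ ≤ (‖V‖ * ‖ζ‖) * (‖V‖ * ‖ζ‖) := h3
        _ = ‖V‖ ^ 2 * ‖ζ‖ ^ 2 := by ring
    rw [hGsq, hζsq] at h2
    linarith [h2]
  have heq2 : ‖V‖ ^ 2 * (r ^ 2 * q * c2) = r * q * c2 := by
    calc ‖V‖ ^ 2 * (r ^ 2 * q * c2) = (r * ‖V‖ ^ 2) * (r * q * c2) := by ring
      _ = r * q * c2 := by rw [hrV, one_mul]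
  nlinarith [hineq, heq2, mul_pos (mul_pos hrpos hqpos) hc2pos,
    mul_pos (mul_pos (mul_pos hrpos hqpos) hc2pos) (mul_pos hrpos hc2pos)]

/-- (Theorem 2.3 of Blecher–Read, the key computation.)  With `b ∈ A` the
matrix with all-ones diagonal and first column `v ∈ ℓ²` having all entries
nonzero (and `v_1 = 1`), the distance from `b` to `J` is `‖v‖₂`, and this
distance is not attained. -/
theorem stmt9 (v : ℕ → ℂ) (hv : Memℓp v 2) (hv0 : v 0 = 1)
    (hvj : ∀ j, v j ≠ 0) (b : Ell2 →L[ℂ] Ell2) (hb : MatRep v (fun _ => 1) b) :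
    Metric.infDist b Jset = ‖(⟨v, hv⟩ : Ell2)‖ ∧
      ∀ y ∈ Jset, ‖b - y‖ ≠ ‖(⟨v, hv⟩ : Ell2)‖ := by
  have hv1 : ‖v 0‖ = 1 := by rw [hv0]; simp
  set V : Ell2 := ⟨v, hv⟩ with hV
  have hVc : ((V : Ell2) : ∀ _ : ℕ, ℂ) = v := rfl
  have Sv : Summable fun k => ‖v k‖ ^ 2 := by
    have := ell2_summable V; simpa [hVc] using this
  have hVsq : ‖V‖ ^ 2 = ∑' k, ‖v k‖ ^ 2 := by
    have := ell2_norm_sq V; simpa [hVc] using this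
  have hq1 : 0 < ‖v 1‖ ^ 2 := by
    have := norm_pos_iff.mpr (hvj 1); positivity
  have hVgt : 1 + ‖v 1‖ ^ 2 ≤ ‖V‖ ^ 2 := by
    rw [hVsq]
    have h := Summable.sum_le_tsum ({0, 1} : Finset ℕ) (fun k _ => sq_nonneg ‖v k‖) Sv
    rw [Finset.sum_pair (by norm_num : (0:ℕ) ≠ 1)] at h
    rw [hv1] at h
    simpa using h
  have hVge1 : 1 ≤ ‖V‖ := by nlinarith [norm_nonneg V]
  -- lower bound
  have lower : ∀ y ∈ Jset, ‖V‖ ≤ ‖b - y‖ := by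
    rintro y ⟨d, hd, hrep⟩
    set e0 : Ell2 := lp.single 2 0 (1:ℂ) with he0
    have h1 : (b - y) e0 = V := by
      apply lp.ext; funext j
      have hb' := hb e0 j
      have hy' := hrep e0 j
      have hcoe : ((b - y) e0 : ∀ _ : ℕ, ℂ) j = (b e0 : ∀ _ : ℕ, ℂ) j - (y e0 : ∀ _ : ℕ, ℂ) j := by
        rw [ContinuousLinearMap.sub_apply, lp.coeFn_sub]; rfl
      have he00 : (e0 : ∀ _ : ℕ, ℂ) 0 = 1 := by
        rw [he0]; exact lp.single_apply_self (E := fun _ : ℕ => ℂ) 2 0 (1:ℂ)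
      rw [hcoe, hb', hy', he00]
      by_cases hj : j = 0
      · simp [hj, hv0, hVc]
      · have : (e0 : ∀ _ : ℕ, ℂ) j = 0 := by
          rw [he0]; exact lp.single_apply_ne (E := fun _ : ℕ => ℂ) 2 0 (1:ℂ) hj
        simp [hj, this, hVc]
    have he0n : ‖e0‖ = 1 := by
      rw [he0]
      have := lp.norm_single (p := 2) (E := fun _ : ℕ => ℂ) (by norm_num) 0 (1:ℂ)
      simpa using this
    calc ‖V‖ = ‖(b - y) e0‖ := by rw [h1]
      _ ≤ ‖b - y‖ * ‖e0‖ := (b - y).le_opNorm e0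
      _ = ‖b - y‖ := by rw [he0n, mul_one]
  -- upper bound
  have upper : ∀ ε : ℝ, 0 < ε → Metric.infDist b Jset ≤ ‖V‖ + ε := by
    intro ε hε
    set t : ℝ := 2 / (‖V‖ ^ 2 - 1) with htdef
    have hden : 0 < ‖V‖ ^ 2 - 1 := by linarith
    have ht : 0 < t := by positivity
    have h1t : 1 + 1 / t ≤ ‖V‖ ^ 2 := by
      have hinv : 1 / t = (‖V‖ ^ 2 - 1) / 2 := by
        rw [htdef, one_div_div]
      rw [hinv]
      linarith
    -- choose N
    have htail : Tendsto (fun N => ∑' i, ‖v (i + N)‖ ^ 2) atTop (nhds 0) :=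
      tendsto_sum_nat_add (fun k => ‖v k‖ ^ 2)
    obtain ⟨N0, hN0⟩ := Metric.tendsto_atTop.mp htail (ε / t) (by positivity)
    set N : ℕ := max N0 1 with hNdef
    have hN : 1 ≤ N := le_max_right _ _
    have hδ : t * ∑' i, ‖v (i + N)‖ ^ 2 ≤ ε := by
      have h := hN0 N (le_max_left _ _)
      rw [Real.dist_eq, sub_zero] at h
      have hnn : 0 ≤ ∑' i, ‖v (i + N)‖ ^ 2 := tsum_nonneg fun i => sq_nonneg _
      rw [abs_of_nonneg hnn] at h
      calc t * ∑' i, ‖v (i + N)‖ ^ 2 ≤ t * (ε / t) :=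
            mul_le_mul_of_nonneg_left h.le ht.le
        _ = ε := by field_simp
    have hbd : ∀ ζ : Ell2, ‖(b - truncOp N) ζ‖ ≤ (‖V‖ + ε) * ‖ζ‖ := by
      intro ζ
      have h2 := est v hv hv1 b (truncOp N) hb N hN (truncOp_rep N) t ε ht hε h1t hδ ζ
      rw [← hV] at h2
      have h5 : (‖V‖ ^ 2 + ε) * ‖ζ‖ ^ 2 ≤ ((‖V‖ + ε) * ‖ζ‖) ^ 2 := by
        nlinarith [mul_nonneg (mul_nonneg (sub_nonneg.mpr hVge1) hε.le) (sq_nonneg ‖ζ‖),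
          mul_nonneg (mul_nonneg hε.le hε.le) (sq_nonneg ‖ζ‖),
          mul_nonneg hε.le (sq_nonneg ‖ζ‖)]
      have h6 : ‖(b - truncOp N) ζ‖ ^ 2 ≤ ((‖V‖ + ε) * ‖ζ‖) ^ 2 := le_trans h2 h5
      have hBnn : 0 ≤ (‖V‖ + ε) * ‖ζ‖ := by positivity
      exact (pow_le_pow_iff_left₀ (norm_nonneg _) hBnn two_ne_zero).mp h6
    have hop : ‖b - truncOp N‖ ≤ ‖V‖ + ε :=
      ContinuousLinearMap.opNorm_le_bound _ (by positivity) hbd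
    calc Metric.infDist b Jset ≤ dist b (truncOp N) :=
          Metric.infDist_le_dist_of_mem (truncOp_mem_Jset N)
      _ = ‖b - truncOp N‖ := by rw [dist_eq_norm]
      _ ≤ ‖V‖ + ε := hop
  have hinfle : Metric.infDist b Jset ≤ ‖V‖ := by
    by_contra h
    push_neg at h
    have hε : 0 < (Metric.infDist b Jset - ‖V‖) / 2 := by linarith
    have := upper _ hε
    linarith
  have hinfge : ‖V‖ ≤ Metric.infDist b Jset := by
    by_contra h
    push_neg at h
    obtain ⟨y, hyJ, hlt⟩ := (Metric.infDist_lt_iff ⟨0, zero_mem_Jset⟩).mp h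
    rw [dist_eq_norm] at hlt
    exact absurd hlt (not_lt.mpr (lower y hyJ))
  refine ⟨le_antisymm hinfle hinfge, ?_⟩
  rintro y hy heq
  obtain ⟨d, hd, hrep⟩ := hy
  have hle : ∀ ζ : Ell2, ‖(b - y) ζ‖ ≤ ‖V‖ * ‖ζ‖ := by
    intro ζ
    calc ‖(b - y) ζ‖ ≤ ‖b - y‖ * ‖ζ‖ := (b - y).le_opNorm ζ
      _ = ‖V‖ * ‖ζ‖ := by rw [heq]
  have hall : ∀ j, 1 ≤ j → d j = 1 := nonatt v hv hvj b y hb d hrep hVge1 hle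
  obtain ⟨M, hM⟩ := Metric.tendsto_atTop.mp hd 1 one_pos
  have h1 := hM (max M 1) (le_max_left _ _)
  rw [hall (max M 1) (le_max_right _ _)] at h1
  simp [dist_eq_norm] at h1
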